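/- arXiv:1207.0184 — 2 statements merged into one kernel-verified Lean document; each statement's English description precedes it below -/
import Mathlib

section
/- In the case b ≡ 4 (mod 5): let n ≥ 0 and consider coefficient sequences (αⱼ⁺)_{j=0}^{3n+4}, (αⱼ⁻)_{j=0}^{3n+4} satisfying: α_{j+n+1}⁺ = c_{1j}·αⱼ⁻ for n+2 ≤ j ≤ 2n+3, αⱼ⁻ = 0 for 2n+4 ≤ j ≤ 3n+4, αⱼ⁺ = c_{2j}·α_{j+2n+3}⁻ for 0 ≤ j ≤ n+1, αⱼ⁺ = 0 for n+2 ≤ j ≤ 2n+2, αⱼ⁺ = c_{3j}·α_{j+n+1}⁻ for 0 ≤ j ≤ n+1, and αⱼ⁻ = 0 for 0 ≤ j ≤ n, where all c_* are nonzero. Then the solution space has dimension at most 1: α₀⁺, α_{n+1}⁻, α_{2n+3}⁻, α_{3n+4}⁺ are pairwise proportional and all other coefficients vanish. -/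
/-- Case `b ≡ 4 (mod 5)` (§4.5): kernel computation. Coefficient sequences
`(αⱼ⁺)`, `(αⱼ⁻)` (for `0 ≤ j ≤ 3n+4`) satisfying the listed linear relations (with
nonzero constants `c₁ⱼ, c₂ⱼ, c₃ⱼ`) are determined up to scalar by `α₀⁺`: the four
coefficients `α₀⁺, α_{n+1}⁻, α_{2n+3}⁻, α_{3n+4}⁺` are proportional with nonzero ratios
and all other coefficients vanish; so the solution space is at most 1-dimensional. -/
theorem case_b4_kernel (n : ℕ) (αp αm : ℕ → ℂ) (c₁ c₂ c₃ : ℕ → ℂ)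
    (hc₁ : ∀ j, c₁ j ≠ 0) (hc₂ : ∀ j, c₂ j ≠ 0) (hc₃ : ∀ j, c₃ j ≠ 0)
    (h1 : ∀ j, n + 2 ≤ j → j ≤ 2 * n + 3 → αp (j + n + 1) = c₁ j * αm j)
    (h2 : ∀ j, 2 * n + 4 ≤ j → j ≤ 3 * n + 4 → αm j = 0)
    (h3 : ∀ j ≤ n + 1, αp j = c₂ j * αm (j + 2 * n + 3))
    (h4 : ∀ j, n + 2 ≤ j → j ≤ 2 * n + 2 → αp j = 0)
    (h5 : ∀ j ≤ n + 1, αp j = c₃ j * αm (j + n + 1))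
    (h6 : ∀ j ≤ n, αm j = 0) :
    ∃ d₁ d₂ d₃ : ℂ, d₁ ≠ 0 ∧ d₂ ≠ 0 ∧ d₃ ≠ 0 ∧
      αm (n + 1) = d₁ * αp 0 ∧ αm (2 * n + 3) = d₂ * αp 0 ∧
      αp (3 * n + 4) = d₃ * αp 0 ∧
      (∀ j ≤ 3 * n + 4, j ≠ 0 → j ≠ 3 * n + 4 → αp j = 0) ∧
      (∀ j ≤ 3 * n + 4, j ≠ n + 1 → j ≠ 2 * n + 3 → αm j = 0) := by
  -- αp vanishes on [1, n+1]
  have hp0 : ∀ j, 1 ≤ j → j ≤ n + 1 → αp j = 0 := fun j h1j hj => by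
    rw [h3 j hj, h2 (j + 2 * n + 3) (by omega) (by omega), mul_zero]
  -- αm vanishes on [n+2, 2n+2]
  have hm1 : ∀ j, n + 2 ≤ j → j ≤ 2 * n + 2 → αm j = 0 := fun j hj hj2 => by
    have h := h5 (j - (n + 1)) (by omega)
    have e : j - (n + 1) + n + 1 = j := by omega
    rw [e, hp0 _ (by omega) (by omega)] at h
    exact ((mul_eq_zero.mp h.symm).resolve_left (hc₃ _))
  -- αp vanishes on [2n+3, 3n+3]
  have hp1 : ∀ j, 2 * n + 3 ≤ j → j ≤ 3 * n + 3 → αp j = 0 := fun j hj hj2 => by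
    have h := h1 (j - (n + 1)) (by omega) (by omega)
    have e : j - (n + 1) + n + 1 = j := by omega
    rw [e, hm1 _ (by omega) (by omega), mul_zero] at h
    exact h
  refine ⟨(c₃ 0)⁻¹, (c₂ 0)⁻¹, c₁ (2 * n + 3) * (c₂ 0)⁻¹,
    inv_ne_zero (hc₃ 0), inv_ne_zero (hc₂ 0),
    mul_ne_zero (hc₁ _) (inv_ne_zero (hc₂ 0)), ?_, ?_, ?_, ?_, ?_⟩
  · have h := h5 0 (by omega)
    simp only [zero_add] at h
    rw [h, inv_mul_cancel_left₀ (hc₃ 0)]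
  · have h := h3 0 (by omega)
    simp only [zero_add] at h
    rw [h, inv_mul_cancel_left₀ (hc₂ 0)]
  · have h := h1 (2 * n + 3) (by omega) (by omega)
    have e : 2 * n + 3 + n + 1 = 3 * n + 4 := by omega
    rw [e] at h
    have h' := h3 0 (by omega)
    simp only [zero_add] at h'
    rw [h, h', mul_assoc (c₁ (2 * n + 3)) _ _, inv_mul_cancel_left₀ (hc₂ 0)]
  · intro j hj hj0 hjt
    rcases Nat.lt_or_ge j (n + 2) with h' | h'
    · exact hp0 j (by omega) (by omega)
    rcases Nat.lt_or_ge j (2 * n + 3) with h'' | h''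
    · exact h4 j h' (by omega)
    · exact hp1 j h'' (by omega)
  · intro j hj hj1 hj2
    rcases Nat.lt_or_ge j (n + 1) with h' | h'
    · exact h6 j (by omega)
    rcases Nat.lt_or_ge j (2 * n + 3) with h'' | h''
    · exact hm1 j (by omega) (by omega)
    · exact h2 j (by omega) hj
end

section
/- Let n ≥ 1 be odd and set v = binom(5n,n) X^n Y^{4n} x³ + 3·binom(5n,2n) X^{2n}Y^{3n} x²y + 3·binom(5n,2n) X^{3n}Y^{2n} xy² + binom(5n,n) X^{4n}Y^n y³ ∈ V_{3,5n}. Then the linear map T^{(3,n)}(v, ·) : V_{3,n} → V_{0,4n} given by the (3,n)-th bi-transvectant is surjective. -/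
open MvPolynomial

/-- Iterated partial derivative `∂^m/∂(X i)^m` on polynomials in four variables. -/
noncomputable def pd (i : Fin 4) (m : ℕ) (f : MvPolynomial (Fin 4) ℂ) :
    MvPolynomial (Fin 4) ℂ :=
  (fun g => pderiv i g)^[m] f

/-- The `(r,s)`-th bi-transvectant of bi-forms of bidegrees `(a,b)` and `(a',b')`
in the variables `x = X 0`, `y = X 1` and `X = X 2`, `Y = X 3`:
on pure tensors it is `T^{(r)} ⊠ T^{(s)}`, and explicitly
`T^{(r,s)}(F,G) = ((a-r)!/a!)((a'-r)!/a'!)((b-s)!/b!)((b'-s)!/b'!) ·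
  Σ_{k,l} (-1)^{k+l} binom(r,k) binom(s,l)
    (∂_x^{r-k}∂_y^k ∂_X^{s-l}∂_Y^l F)(∂_x^k ∂_y^{r-k} ∂_X^l ∂_Y^{s-l} G)`. -/
noncomputable def biT (a b a' b' r s : ℕ) (F G : MvPolynomial (Fin 4) ℂ) :
    MvPolynomial (Fin 4) ℂ :=
  (((a - r).factorial : ℂ) / (a.factorial : ℂ) *
      (((a' - r).factorial : ℂ) / (a'.factorial : ℂ)) *
      (((b - s).factorial : ℂ) / (b.factorial : ℂ)) *
      (((b' - s).factorial : ℂ) / (b'.factorial : ℂ))) •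
    ∑ k ∈ Finset.range (r + 1), ∑ l ∈ Finset.range (s + 1),
      ((-1 : ℂ) ^ (k + l) * (r.choose k : ℂ) * (s.choose l : ℂ)) •
        (pd 0 (r - k) (pd 1 k (pd 2 (s - l) (pd 3 l F))) *
          pd 0 k (pd 1 (r - k) (pd 2 l (pd 3 (s - l) G))))

/-- The space `V_{a,b}` of bi-forms of bidegree `(a,b)` on `ℙ¹×ℙ¹`, realized as the
span of the monomials `x^i y^{a-i} X^j Y^{b-j}`. -/
noncomputable def Vab (a b : ℕ) : Submodule ℂ (MvPolynomial (Fin 4) ℂ) :=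
  Submodule.span ℂ
    {p | ∃ i ≤ a, ∃ j ≤ b, p = X 0 ^ i * X 1 ^ (a - i) * X 2 ^ j * X 3 ^ (b - j)}

section AuxLemmas

lemma pd_succ (i : Fin 4) (m : ℕ) (f : MvPolynomial (Fin 4) ℂ) :
    pd i (m+1) f = pderiv i (pd i m f) := Function.iterate_succ_apply' _ _ _

lemma pd_add (i : Fin 4) (m : ℕ) (f g : MvPolynomial (Fin 4) ℂ) :
    pd i m (f + g) = pd i m f + pd i m g := by
  induction m with
  | zero => rfl
  | succ m ih => simp [pd_succ, ih]

lemma pd_smul (i : Fin 4) (m : ℕ) (c : ℂ) (f : MvPolynomial (Fin 4) ℂ) :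
    pd i m (c • f) = c • pd i m f := by
  induction m with
  | zero => rfl
  | succ m ih => simp [pd_succ, ih]

lemma pd_zero (i : Fin 4) (m : ℕ) : pd i m (0 : MvPolynomial (Fin 4) ℂ) = 0 := by
  induction m with
  | zero => rfl
  | succ m ih => simp [pd_succ, ih]

lemma pderiv_X_pow (i : Fin 4) (e : ℕ) :
    pderiv i ((X i : MvPolynomial (Fin 4) ℂ) ^ e) = (e : ℂ) • X i ^ (e - 1) := by
  rw [pderiv_pow, pderiv_X_self]
  simp [nsmul_eq_mul, mul_comm, smul_eq_C_mul]

lemma pd_X_pow (i : Fin 4) (m e : ℕ) :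
    pd i m ((X i : MvPolynomial (Fin 4) ℂ) ^ e) =
      (e.descFactorial m : ℂ) • X i ^ (e - m) := by
  induction m with
  | zero => simp [pd]
  | succ m ih =>
      rw [pd_succ, ih, Derivation.map_smul, pderiv_X_pow, smul_smul,
        Nat.descFactorial_succ, Nat.sub_sub]
      push_cast
      rw [mul_comm]

lemma pd_mul (i : Fin 4) (m : ℕ) (f g : MvPolynomial (Fin 4) ℂ)
    (hf : pderiv i f = 0) : pd i m (f * g) = f * pd i m g := by
  induction m with
  | zero => rfl
  | succ m ih => rw [pd_succ, ih, pderiv_mul, hf, zero_mul, zero_add, pd_succ]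

lemma pderiv_pow_ne (i j : Fin 4) (h : j ≠ i) (e : ℕ) :
    pderiv i ((X j : MvPolynomial (Fin 4) ℂ) ^ e) = 0 := by
  rw [pderiv_pow, pderiv_X_of_ne h, mul_zero]

lemma pd3M (m e0 e1 e2 e3 : ℕ) :
    pd 3 m ((X 0 : MvPolynomial (Fin 4) ℂ) ^ e0 * X 1 ^ e1 * X 2 ^ e2 * X 3 ^ e3) =
      (e3.descFactorial m : ℂ) • (X 0 ^ e0 * X 1 ^ e1 * X 2 ^ e2 * X 3 ^ (e3 - m)) := by
  rw [pd_mul _ _ _ _ (by simp [pderiv_mul, pderiv_pow_ne]), pd_X_pow, mul_smul_comm]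

lemma pd2M (m e0 e1 e2 e3 : ℕ) :
    pd 2 m ((X 0 : MvPolynomial (Fin 4) ℂ) ^ e0 * X 1 ^ e1 * X 2 ^ e2 * X 3 ^ e3) =
      (e2.descFactorial m : ℂ) • (X 0 ^ e0 * X 1 ^ e1 * X 2 ^ (e2 - m) * X 3 ^ e3) := by
  have h : (X 0 : MvPolynomial (Fin 4) ℂ) ^ e0 * X 1 ^ e1 * X 2 ^ e2 * X 3 ^ e3
      = (X 0 ^ e0 * X 1 ^ e1 * X 3 ^ e3) * X 2 ^ e2 := by ring
  rw [h, pd_mul _ _ _ _ (by simp [pderiv_mul, pderiv_pow_ne]), pd_X_pow, mul_smul_comm]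
  congr 1
  ring

lemma pd1M (m e0 e1 e2 e3 : ℕ) :
    pd 1 m ((X 0 : MvPolynomial (Fin 4) ℂ) ^ e0 * X 1 ^ e1 * X 2 ^ e2 * X 3 ^ e3) =
      (e1.descFactorial m : ℂ) • (X 0 ^ e0 * X 1 ^ (e1 - m) * X 2 ^ e2 * X 3 ^ e3) := by
  have h : (X 0 : MvPolynomial (Fin 4) ℂ) ^ e0 * X 1 ^ e1 * X 2 ^ e2 * X 3 ^ e3
      = (X 0 ^ e0 * X 2 ^ e2 * X 3 ^ e3) * X 1 ^ e1 := by ring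
  rw [h, pd_mul _ _ _ _ (by simp [pderiv_mul, pderiv_pow_ne]), pd_X_pow, mul_smul_comm]
  exact congrArg ((e1.descFactorial m : ℂ) • ·) (by ring)

lemma pd0M (m e0 e1 e2 e3 : ℕ) :
    pd 0 m ((X 0 : MvPolynomial (Fin 4) ℂ) ^ e0 * X 1 ^ e1 * X 2 ^ e2 * X 3 ^ e3) =
      (e0.descFactorial m : ℂ) • (X 0 ^ (e0 - m) * X 1 ^ e1 * X 2 ^ e2 * X 3 ^ e3) := by
  have h : (X 0 : MvPolynomial (Fin 4) ℂ) ^ e0 * X 1 ^ e1 * X 2 ^ e2 * X 3 ^ e3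
      = (X 1 ^ e1 * X 2 ^ e2 * X 3 ^ e3) * X 0 ^ e0 := by ring
  rw [h, pd_mul _ _ _ _ (by simp [pderiv_mul, pderiv_pow_ne]), pd_X_pow, mul_smul_comm]
  congr 1
  ring

lemma pd_all (m0 m1 m2 m3 e0 e1 e2 e3 : ℕ) :
    pd 0 m0 (pd 1 m1 (pd 2 m2 (pd 3 m3
      ((X 0 : MvPolynomial (Fin 4) ℂ) ^ e0 * X 1 ^ e1 * X 2 ^ e2 * X 3 ^ e3)))) =
    ((e0.descFactorial m0 * e1.descFactorial m1 * e2.descFactorial m2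
        * e3.descFactorial m3 : ℕ) : ℂ) •
      (X 0 ^ (e0 - m0) * X 1 ^ (e1 - m1) * X 2 ^ (e2 - m2) * X 3 ^ (e3 - m3)) := by
  rw [pd3M, pd_smul, pd2M, smul_smul, pd_smul, pd1M, smul_smul, pd_smul, pd0M, smul_smul]
  push_cast
  ring_nf

variable {a b a' b' r s : ℕ}

lemma biT_add_right (F G1 G2 : MvPolynomial (Fin 4) ℂ) :
    biT a b a' b' r s F (G1 + G2) = biT a b a' b' r s F G1 + biT a b a' b' r s F G2 := by
  simp only [biT, pd_add, mul_add, smul_add, Finset.sum_add_distrib]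

lemma biT_smul_right (c : ℂ) (F G : MvPolynomial (Fin 4) ℂ) :
    biT a b a' b' r s F (c • G) = c • biT a b a' b' r s F G := by
  rw [biT, biT, smul_comm c]
  congr 1
  rw [Finset.smul_sum]
  refine Finset.sum_congr rfl fun k _ => ?_
  rw [Finset.smul_sum]
  refine Finset.sum_congr rfl fun l _ => ?_
  rw [pd_smul, pd_smul, pd_smul, pd_smul, mul_smul_comm, smul_comm]

lemma biT_zero_right (F : MvPolynomial (Fin 4) ℂ) :
    biT a b a' b' r s F 0 = 0 := by
  simp only [biT, pd_zero, mul_zero, smul_zero, Finset.sum_const_zero]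

lemma biT_add_left (F1 F2 G : MvPolynomial (Fin 4) ℂ) :
    biT a b a' b' r s (F1 + F2) G = biT a b a' b' r s F1 G + biT a b a' b' r s F2 G := by
  simp only [biT, pd_add, add_mul, smul_add, Finset.sum_add_distrib]

lemma biT_smul_left (c : ℂ) (F G : MvPolynomial (Fin 4) ℂ) :
    biT a b a' b' r s (c • F) G = c • biT a b a' b' r s F G := by
  rw [biT, biT, smul_comm c]
  congr 1
  rw [Finset.smul_sum]
  refine Finset.sum_congr rfl fun k _ => ?_
  rw [Finset.smul_sum]
  refine Finset.sum_congr rfl fun l _ => ?_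
  rw [pd_smul, pd_smul, pd_smul, pd_smul, smul_mul_assoc, smul_comm]

lemma biT_ne (n i k a : ℕ) (hi : i ≤ 3) (hk : k ≤ 3) (ha : a ≤ n) (hik : i ≠ k) :
    biT 3 (5*n) 3 n 3 n
      (X 0 ^ i * X 1 ^ (3-i) * X 2 ^ ((4-i)*n) * X 3 ^ ((i+1)*n))
      (X 0 ^ (3-k) * X 1 ^ k * X 2 ^ a * X 3 ^ (n-a)) = 0 := by
  rw [biT, Finset.sum_eq_zero, smul_zero]
  intro k' hk'
  rw [Finset.sum_eq_zero]
  intro l hl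
  simp only [Finset.mem_range] at hk' hl
  rw [pd_all, pd_all]
  rcases eq_or_ne k' (3 - i) with h | h
  · -- G coefficient vanishes since k' = 3 - i ≠ 3 - k
    have h2 : (3-k).descFactorial k' * k.descFactorial (3-k') = 0 := by
      rw [Nat.mul_eq_zero]
      simp only [Nat.descFactorial_eq_zero_iff_lt]
      omega
    have hz : (3-k).descFactorial k' * k.descFactorial (3-k') * a.descFactorial l *
        (n-a).descFactorial (n-l) = 0 := by rw [h2, zero_mul, zero_mul]
    rw [hz]
    simp
  · -- F coefficient vanishes since k' ≠ 3 - i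
    have h2 : i.descFactorial (3-k') * (3-i).descFactorial k' = 0 := by
      rw [Nat.mul_eq_zero]
      simp only [Nat.descFactorial_eq_zero_iff_lt]
      omega
    have hz : i.descFactorial (3-k') * (3-i).descFactorial k' * ((4-i)*n).descFactorial (n-l) *
        ((i+1)*n).descFactorial l = 0 := by rw [h2, zero_mul, zero_mul]
    rw [hz]
    simp

lemma biT_eq (n k a : ℕ) (hk : k ≤ 3) (ha : a ≤ n) (hn : 1 ≤ n) :
    ∃ c : ℂ, c ≠ 0 ∧ biT 3 (5*n) 3 n 3 n
      (X 0 ^ k * X 1 ^ (3-k) * X 2 ^ ((4-k)*n) * X 3 ^ ((k+1)*n))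
      (X 0 ^ (3-k) * X 1 ^ k * X 2 ^ a * X 3 ^ (n-a))
      = c • (X 2 ^ ((3-k)*n + a) * X 3 ^ ((k+1)*n - a)) := by
  have hE : (4-k)*n - (n-a) = (3-k)*n + a := by
    have h4 : (4-k)*n = (3-k)*n + n := by
      rw [show 4-k = (3-k)+1 from by omega, add_mul, one_mul]
    omega
  have key : biT 3 (5*n) 3 n 3 n
      (X 0 ^ k * X 1 ^ (3-k) * X 2 ^ ((4-k)*n) * X 3 ^ ((k+1)*n))
      (X 0 ^ (3-k) * X 1 ^ k * X 2 ^ a * X 3 ^ (n-a))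
      = ((((3-3).factorial : ℂ) / (Nat.factorial 3 : ℂ) *
          (((3-3).factorial : ℂ) / (Nat.factorial 3 : ℂ)) *
          (((5*n - n).factorial : ℂ) / ((5*n).factorial : ℂ)) *
          (((n - n).factorial : ℂ) / (n.factorial : ℂ))) *
         (((-1 : ℂ) ^ ((3-k) + a) * ((Nat.choose 3 (3-k)) : ℂ) * ((Nat.choose n a) : ℂ)) *
          (((k.descFactorial k * (3-k).descFactorial (3-k) *
              ((4-k)*n).descFactorial (n-a) * ((k+1)*n).descFactorial a) : ℕ) : ℂ) *
          ((((3-k).descFactorial (3-k) * k.descFactorial k *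
              a.descFactorial a * (n-a).descFactorial (n-a)) : ℕ) : ℂ)))
        • (X 2 ^ ((3-k)*n + a) * X 3 ^ ((k+1)*n - a)) := by
    rw [biT]
    rw [Finset.sum_eq_single_of_mem (3-k) (Finset.mem_range.mpr (by omega))]
    · rw [Finset.sum_eq_single_of_mem a (Finset.mem_range.mpr (by omega))]
      · rw [pd_all, pd_all, show 3 - (3-k) = k from by omega, hE]
        simp only [Nat.sub_self, pow_zero, one_mul, mul_one, smul_mul_assoc,
          mul_smul_comm, smul_smul]
        ring_nf
      · intro l hl hla
        simp only [Finset.mem_range] at hl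
        rw [pd_all, pd_all]
        have h2 : a.descFactorial l * (n-a).descFactorial (n-l) = 0 := by
          rw [Nat.mul_eq_zero]
          simp only [Nat.descFactorial_eq_zero_iff_lt]
          omega
        have hz : (3-k).descFactorial (3-k) * k.descFactorial (3-(3-k)) * a.descFactorial l *
            (n-a).descFactorial (n-l) = 0 := by
          rw [mul_assoc, h2, mul_zero]
        rw [hz]
        simp
    · intro k' hk' hkk
      rw [Finset.sum_eq_zero]
      intro l hl
      simp only [Finset.mem_range] at hk' hl
      rw [pd_all, pd_all]
      have h2 : (3-k).descFactorial k' * k.descFactorial (3-k') = 0 := by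
        rw [Nat.mul_eq_zero]
        simp only [Nat.descFactorial_eq_zero_iff_lt]
        omega
      have hz : (3-k).descFactorial k' * k.descFactorial (3-k') * a.descFactorial l *
          (n-a).descFactorial (n-l) = 0 := by rw [h2, zero_mul, zero_mul]
      rw [hz]
      simp
  refine ⟨_, ?_, key⟩
  have hne : ∀ m : ℕ, m ≠ 0 → ((m : ℂ) ≠ 0) := fun m hm => Nat.cast_ne_zero.mpr hm
  refine mul_ne_zero (by
    refine mul_ne_zero (mul_ne_zero (mul_ne_zero ?_ ?_) ?_) ?_ <;>
      exact div_ne_zero (hne _ (Nat.factorial_ne_zero _)) (hne _ (Nat.factorial_ne_zero _)))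
    (mul_ne_zero (mul_ne_zero ?_ ?_) ?_)
  · exact mul_ne_zero (mul_ne_zero (pow_ne_zero _ (by norm_num))
      (hne _ (Nat.pos_iff_ne_zero.mp (Nat.choose_pos (by omega)))))
      (hne _ (Nat.pos_iff_ne_zero.mp (Nat.choose_pos ha)))
  · refine hne _ ?_
    simp only [Ne, Nat.mul_eq_zero, Nat.descFactorial_eq_zero_iff_lt, not_or, not_lt]
    refine ⟨⟨⟨le_refl _, le_refl _⟩, ?_⟩, ?_⟩
    · calc n - a ≤ n := Nat.sub_le _ _
        _ ≤ (4-k)*n := Nat.le_mul_of_pos_left n (by omega)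
    · calc a ≤ n := ha
        _ ≤ (k+1)*n := Nat.le_mul_of_pos_left n (by omega)
  · refine hne _ ?_
    simp only [Ne, Nat.mul_eq_zero, Nat.descFactorial_eq_zero_iff_lt, not_or, not_lt]
    omega


end AuxLemmas

lemma gen_hit (n j : ℕ) (hn : 1 ≤ n) (hj : j ≤ 4*n) :
    ∃ w ∈ Vab 3 n,
      biT 3 (5 * n) 3 n 3 n
        ((((5 * n).choose n : ℂ)) • (X 2 ^ n * X 3 ^ (4 * n) * X 0 ^ 3) +
         ((3 * ((5 * n).choose (2 * n)) : ℂ)) •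
            (X 2 ^ (2 * n) * X 3 ^ (3 * n) * X 0 ^ 2 * X 1) +
         ((3 * ((5 * n).choose (2 * n)) : ℂ)) •
            (X 2 ^ (3 * n) * X 3 ^ (2 * n) * X 0 * X 1 ^ 2) +
         (((5 * n).choose n : ℂ)) • (X 2 ^ (4 * n) * X 3 ^ n * X 1 ^ 3))
        w = X 2 ^ j * X 3 ^ (4*n - j) := by
  have e3 : (X 2 ^ n * X 3 ^ (4*n) * X 0 ^ 3 : MvPolynomial (Fin 4) ℂ)
      = X 0 ^ 3 * X 1 ^ (3-3) * X 2 ^ ((4-3)*n) * X 3 ^ ((3+1)*n) := by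
    simp only [show (3:ℕ)-3 = 0 from rfl, show (4:ℕ)-3 = 1 from rfl,
      show (3:ℕ)+1 = 4 from rfl, pow_zero, one_mul, mul_one]
    ring
  have e2 : (X 2 ^ (2*n) * X 3 ^ (3*n) * X 0 ^ 2 * X 1 : MvPolynomial (Fin 4) ℂ)
      = X 0 ^ 2 * X 1 ^ (3-2) * X 2 ^ ((4-2)*n) * X 3 ^ ((2+1)*n) := by
    simp only [show (3:ℕ)-2 = 1 from rfl, show (4:ℕ)-2 = 2 from rfl,
      show (2:ℕ)+1 = 3 from rfl, pow_one]
    ring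
  have e1 : (X 2 ^ (3*n) * X 3 ^ (2*n) * X 0 * X 1 ^ 2 : MvPolynomial (Fin 4) ℂ)
      = X 0 ^ 1 * X 1 ^ (3-1) * X 2 ^ ((4-1)*n) * X 3 ^ ((1+1)*n) := by
    simp only [show (3:ℕ)-1 = 2 from rfl, show (4:ℕ)-1 = 3 from rfl,
      show (1:ℕ)+1 = 2 from rfl, pow_one]
    ring
  have e0 : (X 2 ^ (4*n) * X 3 ^ n * X 1 ^ 3 : MvPolynomial (Fin 4) ℂ)
      = X 0 ^ 0 * X 1 ^ (3-0) * X 2 ^ ((4-0)*n) * X 3 ^ ((0+1)*n) := by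
    simp only [show (3:ℕ)-0 = 3 from rfl, show (4:ℕ)-0 = 4 from rfl,
      show (0:ℕ)+1 = 1 from rfl, pow_zero, one_mul]
    ring
  rcases Nat.lt_or_ge n j with h1 | h1
  · rcases Nat.lt_or_ge (2*n) j with h2 | h2
    · rcases Nat.lt_or_ge (3*n) j with h3 | h3
      · -- k = 0, a = j - 3n
        obtain ⟨c, hc0, hc⟩ := biT_eq n 0 (j - 3*n) (by omega) (by omega) hn
        have hC : ((5*n).choose n : ℂ) ≠ 0 :=
          Nat.cast_ne_zero.mpr (Nat.pos_iff_ne_zero.mp (Nat.choose_pos (by omega)))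
        refine ⟨(((5*n).choose n : ℂ) * c)⁻¹ •
          (X 0 ^ (3-0) * X 1 ^ 0 * X 2 ^ (j - 3*n) * X 3 ^ (n - (j - 3*n))), ?_, ?_⟩
        · exact Submodule.smul_mem _ _ (Submodule.subset_span
            ⟨3, by omega, j - 3*n, by omega, by norm_num⟩)
        · rw [biT_smul_right, e3, e2, e1, e0, biT_add_left, biT_add_left, biT_add_left,
            biT_smul_left, biT_smul_left, biT_smul_left, biT_smul_left, hc,
            biT_ne n 3 0 (j-3*n) (by omega) (by omega) (by omega) (by omega),
            biT_ne n 2 0 (j-3*n) (by omega) (by omega) (by omega) (by omega),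
            biT_ne n 1 0 (j-3*n) (by omega) (by omega) (by omega) (by omega),
            show (3-0)*n + (j-3*n) = j from by omega,
            show (0+1)*n - (j-3*n) = 4*n - j from by omega]
          simp only [smul_zero, add_zero, zero_add, smul_smul]
          rw [inv_mul_cancel₀ (mul_ne_zero hC hc0), one_smul]
      · -- k = 1, a = j - 2n
        obtain ⟨c, hc0, hc⟩ := biT_eq n 1 (j - 2*n) (by omega) (by omega) hn
        have hC : ((3:ℂ) * ((5*n).choose (2*n) : ℕ)) ≠ 0 := by
          refine mul_ne_zero (by norm_num) ?_
          exact Nat.cast_ne_zero.mpr (Nat.pos_iff_ne_zero.mp (Nat.choose_pos (by omega)))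
        refine ⟨((3 * ((5*n).choose (2*n)) : ℂ) * c)⁻¹ •
          (X 0 ^ (3-1) * X 1 ^ 1 * X 2 ^ (j - 2*n) * X 3 ^ (n - (j - 2*n))), ?_, ?_⟩
        · exact Submodule.smul_mem _ _ (Submodule.subset_span
            ⟨2, by omega, j - 2*n, by omega, by norm_num⟩)
        · rw [biT_smul_right, e3, e2, e1, e0, biT_add_left, biT_add_left, biT_add_left,
            biT_smul_left, biT_smul_left, biT_smul_left, biT_smul_left, hc,
            biT_ne n 3 1 (j-2*n) (by omega) (by omega) (by omega) (by omega),
            biT_ne n 2 1 (j-2*n) (by omega) (by omega) (by omega) (by omega),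
            biT_ne n 0 1 (j-2*n) (by omega) (by omega) (by omega) (by omega),
            show (3-1)*n + (j-2*n) = j from by omega,
            show (1+1)*n - (j-2*n) = 4*n - j from by omega]
          simp only [smul_zero, add_zero, zero_add, smul_smul]
          rw [inv_mul_cancel₀ (mul_ne_zero hC hc0), one_smul]
    · -- k = 2, a = j - n
      obtain ⟨c, hc0, hc⟩ := biT_eq n 2 (j - n) (by omega) (by omega) hn
      have hC : ((3:ℂ) * ((5*n).choose (2*n) : ℕ)) ≠ 0 := by
        refine mul_ne_zero (by norm_num) ?_
        exact Nat.cast_ne_zero.mpr (Nat.pos_iff_ne_zero.mp (Nat.choose_pos (by omega)))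
      refine ⟨((3 * ((5*n).choose (2*n)) : ℂ) * c)⁻¹ •
        (X 0 ^ (3-2) * X 1 ^ 2 * X 2 ^ (j - n) * X 3 ^ (n - (j - n))), ?_, ?_⟩
      · exact Submodule.smul_mem _ _ (Submodule.subset_span
          ⟨1, by omega, j - n, by omega, by norm_num⟩)
      · rw [biT_smul_right, e3, e2, e1, e0, biT_add_left, biT_add_left, biT_add_left,
          biT_smul_left, biT_smul_left, biT_smul_left, biT_smul_left, hc,
          biT_ne n 3 2 (j-n) (by omega) (by omega) (by omega) (by omega),
          biT_ne n 1 2 (j-n) (by omega) (by omega) (by omega) (by omega),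
          biT_ne n 0 2 (j-n) (by omega) (by omega) (by omega) (by omega),
          show (3-2)*n + (j-n) = j from by omega,
          show (2+1)*n - (j-n) = 4*n - j from by omega]
        simp only [smul_zero, add_zero, zero_add, smul_smul]
        rw [inv_mul_cancel₀ (mul_ne_zero hC hc0), one_smul]
  · -- k = 3, a = j
    obtain ⟨c, hc0, hc⟩ := biT_eq n 3 j (by omega) (by omega) hn
    have hC : ((5*n).choose n : ℂ) ≠ 0 :=
      Nat.cast_ne_zero.mpr (Nat.pos_iff_ne_zero.mp (Nat.choose_pos (by omega)))
    refine ⟨(((5*n).choose n : ℂ) * c)⁻¹ •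
      (X 0 ^ (3-3) * X 1 ^ 3 * X 2 ^ j * X 3 ^ (n - j)), ?_, ?_⟩
    · exact Submodule.smul_mem _ _ (Submodule.subset_span
        ⟨0, by omega, j, by omega, by norm_num⟩)
    · rw [biT_smul_right, e3, e2, e1, e0, biT_add_left, biT_add_left, biT_add_left,
        biT_smul_left, biT_smul_left, biT_smul_left, biT_smul_left, hc,
        biT_ne n 2 3 j (by omega) (by omega) (by omega) (by omega),
        biT_ne n 1 3 j (by omega) (by omega) (by omega) (by omega),
        biT_ne n 0 3 j (by omega) (by omega) (by omega) (by omega),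
        show (3-3)*n + j = j from by omega,
        show (3+1)*n - j = 4*n - j from by omega]
      simp only [smul_zero, add_zero, zero_add, smul_smul]
      rw [inv_mul_cancel₀ (mul_ne_zero hC hc0), one_smul]

/-- §4.1, case `b ≡ 0 (mod 5)`: for `n` odd and
`v = binom(5n,n) XⁿY⁴ⁿ x³ + 3 binom(5n,2n) X²ⁿY³ⁿ x²y + 3 binom(5n,2n) X³ⁿY²ⁿ xy²
  + binom(5n,n) X⁴ⁿYⁿ y³ ∈ V_{3,5n}`,
the map `T^{(3,n)}(v,·) : V_{3,n} → V_{0,4n}` is surjective. -/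
theorem case_b0_Tv_surjective (n : ℕ) (hn : Odd n) :
    ∀ u ∈ Vab 0 (4 * n), ∃ w ∈ Vab 3 n,
      biT 3 (5 * n) 3 n 3 n
        ((((5 * n).choose n : ℂ)) • (X 2 ^ n * X 3 ^ (4 * n) * X 0 ^ 3) +
         ((3 * ((5 * n).choose (2 * n)) : ℂ)) •
            (X 2 ^ (2 * n) * X 3 ^ (3 * n) * X 0 ^ 2 * X 1) +
         ((3 * ((5 * n).choose (2 * n)) : ℂ)) •
            (X 2 ^ (3 * n) * X 3 ^ (2 * n) * X 0 * X 1 ^ 2) +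
         (((5 * n).choose n : ℂ)) • (X 2 ^ (4 * n) * X 3 ^ n * X 1 ^ 3))
        w = u := by
  intro u hu
  have hn1 : 1 ≤ n := hn.pos
  refine Submodule.span_induction ?_ ?_ ?_ ?_ hu
  · rintro p ⟨i, hi, j, hj, rfl⟩
    obtain rfl : i = 0 := by omega
    obtain ⟨w, hw, hbw⟩ := gen_hit n j hn1 hj
    refine ⟨w, hw, ?_⟩
    rw [hbw]
    norm_num
  · exact ⟨0, Submodule.zero_mem _, biT_zero_right _⟩
  · rintro x y hx hy ⟨w1, h1, hb1⟩ ⟨w2, h2, hb2⟩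
    exact ⟨w1 + w2, Submodule.add_mem _ h1 h2, by rw [biT_add_right, hb1, hb2]⟩
  · rintro r x hx ⟨w, hw, hb⟩
    exact ⟨r • w, Submodule.smul_mem _ _ hw, by rw [biT_smul_right, hb]⟩
end
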